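/- Let d = 2 and a = (a₁, a₂) be homogeneous of degree −1 on ℝ². The matrix A with A_{h,k} = ∫_{S¹} a_h a_k dσ satisfies: the tensor contraction 𝔉(x):A (with 𝔉_{j;h,k}(x) = (Γ(2)/π)((δ_{j,h}x_k + δ_{h,k}x_j + δ_{k,j}x_h)|x|² − 4 x_j x_h x_k)/|x|⁶) vanishes identically for all x ≠ 0 if and only if ∫_{S¹} a₁² dσ = ∫_{S¹} a₂² dσ and ∫_{S¹} a₁ a₂ dσ = 0. -/

import Mathlib

open MeasureTheory
open scoped BigOperators

/-- The surface measure on the unit circle `S¹ ⊂ ℝ²`. -/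
noncomputable def circleMeasure :
    Measure (Metric.sphere (0 : EuclideanSpace ℝ (Fin 2)) 1) :=
  (volume : Measure (EuclideanSpace ℝ (Fin 2))).toSphere

/-- The tensor `𝔉_{j;h,k}` in dimension `2`:
`𝔉_{j;h,k}(x) = (Γ(2)/π)((δ_{j,h}x_k + δ_{h,k}x_j + δ_{k,j}x_h)|x|² − 4 x_j x_h x_k)/|x|⁶`. -/
noncomputable def FF2 (j h k : Fin 2) (x : EuclideanSpace ℝ (Fin 2)) : ℝ :=
  Real.Gamma 2 / Real.pi *
    (((if j = h then (1 : ℝ) else 0) * x k + (if h = k then (1 : ℝ) else 0) * x j +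
        (if k = j then (1 : ℝ) else 0) * x h) * ‖x‖ ^ 2
      - 4 * x j * x h * x k) / ‖x‖ ^ 6

set_option maxHeartbeats 1000000 in
theorem stmt_18 (a : EuclideanSpace ℝ (Fin 2) → Fin 2 → ℝ)
    (hhom : ∀ (c : ℝ), 0 < c → ∀ x : EuclideanSpace ℝ (Fin 2), a (c • x) = c⁻¹ • a x)
    (A : Fin 2 → Fin 2 → ℝ)
    (hA : ∀ h k : Fin 2, A h k =
      ∫ ω : Metric.sphere (0 : EuclideanSpace ℝ (Fin 2)) 1,
        a (ω : EuclideanSpace ℝ (Fin 2)) h * a (ω : EuclideanSpace ℝ (Fin 2)) k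
          ∂circleMeasure) :
    (∀ x : EuclideanSpace ℝ (Fin 2), x ≠ 0 → ∀ j : Fin 2,
        (∑ h : Fin 2, ∑ k : Fin 2, FF2 j h k x * A h k) = 0) ↔
      (A 0 0 = A 1 1 ∧ A 0 1 = 0) := by
  have hsym : A 1 0 = A 0 1 := by
    rw [hA, hA]
    exact integral_congr_ae (Filter.Eventually.of_forall fun ω => mul_comm _ _)
  have hnormsq : ∀ x : EuclideanSpace ℝ (Fin 2), ‖x‖ ^ 2 = x 0 ^ 2 + x 1 ^ 2 := by
    intro x
    rw [EuclideanSpace.norm_eq, Real.sq_sqrt (by positivity)]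
    simp [Fin.sum_univ_two, sq_abs]
  constructor
  · intro H
    have hx0 : (EuclideanSpace.single (0 : Fin 2) (1:ℝ)) ≠ 0 := by
      intro h
      have := congrArg (fun v : EuclideanSpace ℝ (Fin 2) => v 0) h
      simp [EuclideanSpace.single_apply] at this
    have hx1 : (EuclideanSpace.single (1 : Fin 2) (1:ℝ)) ≠ 0 := by
      intro h
      have := congrArg (fun v : EuclideanSpace ℝ (Fin 2) => v 1) h
      simp [EuclideanSpace.single_apply] at this
    have h0 := H _ hx0 0
    have h1 := H _ hx1 0
    simp only [FF2, Fin.sum_univ_two, EuclideanSpace.single_apply, EuclideanSpace.norm_single,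
      Real.Gamma_two, norm_one] at h0 h1
    norm_num at h0 h1
    rw [hsym] at h1
    have hpi : (Real.pi)⁻¹ ≠ 0 := inv_ne_zero Real.pi_ne_zero
    have e0 : A 0 0 = A 1 1 := by
      have h := mul_left_cancel₀ hpi (show Real.pi⁻¹ * A 1 1 = Real.pi⁻¹ * A 0 0 by linarith)
      linarith
    have e1 : A 0 1 = 0 := by
      have h : Real.pi⁻¹ * A 0 1 = 0 := by linarith
      rcases mul_eq_zero.mp h with h | h
      · exact absurd h hpi
      · exact h
    exact ⟨e0, e1⟩
  · rintro ⟨h11, h01⟩ x hx j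
    have hn : ‖x‖ ≠ 0 := by simpa using hx
    have h2 := hnormsq x
    have h10 : A 1 0 = 0 := by rw [hsym, h01]
    fin_cases j <;>
      simp only [FF2, Fin.sum_univ_two, h01, h10, ← h11, Fin.zero_eta, Fin.mk_one, Fin.isValue] <;>
      simp only [Fin.isValue, zero_ne_one, one_ne_zero, if_true, if_false, ite_true, ite_false, eq_self_iff_true] <;>
      field_simp <;>
      rw [h2] <;> ring
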